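/- Let Λ ∈ ℝ^{n×n} be Metzler and let Λ̄ ∈ ℝ^{n×n} be Hurwitz with Λ̄ ⪰ Λ entrywise. Then there exists a diagonal matrix D = diag(d₁,…,d_n) with all d_i > 0 such that Λ̄'D + DΛ̄ is negative definite. -/

import Mathlib

open Matrix Filter Pointwise

attribute [local instance] Matrix.linftyOpNormedAddCommGroup Matrix.linftyOpNormedRing
  Matrix.linftyOpNormedAlgebra

namespace MHDL

/-- A complex number that is a nonnegative real. -/
def Nn (z : ℂ) : Prop := 0 ≤ z.re ∧ z.im = 0

lemma Nn.zero : Nn 0 := ⟨le_rfl, rfl⟩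

lemma Nn.one : Nn 1 := ⟨zero_le_one, rfl⟩

lemma Nn.add {z w : ℂ} (hz : Nn z) (hw : Nn w) : Nn (z + w) :=
  ⟨by simpa using add_nonneg hz.1 hw.1, by simp [hz.2, hw.2]⟩

lemma Nn.mul {z w : ℂ} (hz : Nn z) (hw : Nn w) : Nn (z * w) := by
  refine ⟨?_, ?_⟩
  · simp only [Complex.mul_re, hz.2, hw.2, mul_zero, sub_zero]
    exact mul_nonneg hz.1 hw.1
  · simp [Complex.mul_im, hz.2, hw.2]

lemma Nn.ofReal {r : ℝ} (hr : 0 ≤ r) : Nn (r : ℂ) := ⟨by simpa using hr, by simp⟩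

lemma Nn.sum {α : Type*} {s : Finset α} {f : α → ℂ} (h : ∀ a ∈ s, Nn (f a)) :
    Nn (∑ a ∈ s, f a) := by
  classical
  induction s using Finset.induction_on with
  | empty => simpa using Nn.zero
  | insert _ _ hx ih =>
    rw [Finset.sum_insert hx]
    exact (h _ (Finset.mem_insert_self _ _)).add
      (ih fun a ha => h a (Finset.mem_insert_of_mem ha))

lemma isClosed_Nn : IsClosed {z : ℂ | Nn z} := by
  have : {z : ℂ | Nn z} = Complex.re ⁻¹' Set.Ici 0 ∩ Complex.im ⁻¹' {0} := by
    ext z; simp [Nn, Set.mem_preimage]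
  rw [this]
  exact (isClosed_Ici.preimage Complex.continuous_re).inter
    (isClosed_singleton.preimage Complex.continuous_im)

variable {n : ℕ}

lemma nnM_mul {M N : Matrix (Fin n) (Fin n) ℂ} (hM : ∀ i j, Nn (M i j))
    (hN : ∀ i j, Nn (N i j)) : ∀ i j, Nn ((M * N) i j) := fun i j => by
  rw [Matrix.mul_apply]
  exact Nn.sum fun k _ => (hM i k).mul (hN k j)

lemma nnM_one : ∀ i j : Fin n, Nn ((1 : Matrix (Fin n) (Fin n) ℂ) i j) := fun i j => by
  by_cases h : i = j <;> simp [Matrix.one_apply, h, Nn.zero, Nn.one]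

lemma nnM_pow {M : Matrix (Fin n) (Fin n) ℂ} (hM : ∀ i j, Nn (M i j)) :
    ∀ k, ∀ i j, Nn ((M ^ k) i j) := by
  intro k
  induction k with
  | zero => simpa using nnM_one
  | succ k ih => rw [pow_succ]; exact nnM_mul ih hM

lemma entry_norm_le (A : Matrix (Fin n) (Fin n) ℂ) (i j : Fin n) : ‖A i j‖ ≤ ‖A‖ := by
  have : ‖A i j‖₊ ≤ ‖A‖₊ := by
    rw [Matrix.linfty_opNNNorm_def]
    exact le_trans (Finset.single_le_sum (f := fun j => ‖A i j‖₊) (fun _ _ => zero_le)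
      (Finset.mem_univ j)) (Finset.le_sup (f := fun i => ∑ j, ‖A i j‖₊) (Finset.mem_univ i))
  exact this

/-- The entry evaluation additive monoid hom. -/
def entryHom (i j : Fin n) : Matrix (Fin n) (Fin n) ℂ →+ ℂ where
  toFun M := M i j
  map_zero' := rfl
  map_add' _ _ := rfl

lemma entry_continuous (i j : Fin n) : Continuous (entryHom (n := n) i j) :=
  AddMonoidHomClass.continuous_of_bound _ 1 fun M => by
    rw [one_mul]; exact entry_norm_le M i j

/-- The key lemma: a Metzler Hurwitz matrix has a positive vector `v` with `M v = -1`. -/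
lemma exists_pos_vec (M : Matrix (Fin n) (Fin n) ℝ)
    (hMetz : ∀ i j, i ≠ j → 0 ≤ M i j)
    (hHur : ∀ μ ∈ spectrum ℂ (M.map Complex.ofReal), μ.re < 0) :
    ∃ v : Fin n → ℝ, (∀ i, 0 < v i) ∧ ∀ i, (M *ᵥ v) i = -1 := by
  classical
  cases isEmpty_or_nonempty (Fin n) with
  | inl h => exact ⟨fun _ => 1, fun i => h.elim i, fun i => h.elim i⟩
  | inr h =>
  set B : Matrix (Fin n) (Fin n) ℂ := M.map Complex.ofReal with hBdef
  have hcpt : IsCompact (spectrum ℂ B) := spectrum.isCompact B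
  have hne : (spectrum ℂ B).Nonempty := spectrum.nonempty B
  obtain ⟨μ₀, hμ₀, hμ₀max⟩ := hcpt.exists_isMaxOn hne Complex.continuous_re.continuousOn
  obtain ⟨μ₁, hμ₁, hμ₁max⟩ := hcpt.exists_isMaxOn hne continuous_norm.continuousOn
  obtain ⟨δ, hδ, hsre⟩ : ∃ δ : ℝ, 0 < δ ∧ ∀ μ ∈ spectrum ℂ B, μ.re ≤ -δ := by
    refine ⟨-μ₀.re, by have := hHur μ₀ hμ₀; linarith, fun μ hμ => ?_⟩
    have h2 := hμ₀max hμ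
    simp only [Set.mem_setOf_eq] at h2
    linarith
  obtain ⟨R, hR0, hsnorm⟩ : ∃ R : ℝ, 0 ≤ R ∧ ∀ μ ∈ spectrum ℂ B, ‖μ‖ ≤ R :=
    ⟨‖μ₁‖, norm_nonneg _, fun μ hμ => hμ₁max hμ⟩
  obtain ⟨s, hs0, hsδ, hsdiag, hsR⟩ :
      ∃ s : ℝ, 0 < s ∧ δ ≤ s ∧ (∀ i, 0 ≤ M i i + s) ∧ R ^ 2 ≤ (s - δ) * δ := by
    refine ⟨R ^ 2 / δ + δ + ∑ i, |M i i|, ?_, ?_, ?_, ?_⟩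
    · have h1 : (0:ℝ) ≤ R ^ 2 / δ := div_nonneg (sq_nonneg R) hδ.le
      have h2 : (0:ℝ) ≤ ∑ i, |M i i| := Finset.sum_nonneg fun _ _ => abs_nonneg _
      linarith
    · have h1 : (0:ℝ) ≤ R ^ 2 / δ := div_nonneg (sq_nonneg R) hδ.le
      have h2 : (0:ℝ) ≤ ∑ i, |M i i| := Finset.sum_nonneg fun _ _ => abs_nonneg _
      linarith
    · intro i
      have h1 : |M i i| ≤ ∑ j, |M j j| :=
        Finset.single_le_sum (f := fun j => |M j j|) (fun _ _ => abs_nonneg _)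
          (Finset.mem_univ i)
      have h2 : -(M i i) ≤ |M i i| := neg_le_abs _
      have h3 : (0:ℝ) ≤ R ^ 2 / δ := div_nonneg (sq_nonneg R) hδ.le
      linarith
    · have h1 : R ^ 2 / δ * δ = R ^ 2 := by field_simp
      nlinarith [Finset.sum_nonneg (fun i (_ : i ∈ Finset.univ) => abs_nonneg (M i i)), hδ]
  set A : Matrix (Fin n) (Fin n) ℂ := (s : ℂ) • 1 + B with hAdef
  have hspecA : spectrum ℂ A = ({(s : ℂ)} : Set ℂ) + spectrum ℂ B := by
    rw [hAdef, ← Algebra.algebraMap_eq_smul_one]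
    exact (spectrum.singleton_add_eq B (s : ℂ)).symm
  have hAnorm : ∀ μ' ∈ spectrum ℂ A, ‖μ'‖ ≤ s - δ / 2 := by
    intro μ' hμ'
    rw [hspecA, Set.singleton_add] at hμ'
    obtain ⟨μ, hμ, rfl⟩ := hμ'
    have ha : μ.re ≤ -δ := hsre μ hμ
    have hb : μ.re * μ.re + μ.im * μ.im ≤ R ^ 2 := by
      have h1 : ‖μ‖ ^ 2 ≤ R ^ 2 := by
        have := hsnorm μ hμ
        nlinarith [norm_nonneg μ]
      have h2 : ‖μ‖ ^ 2 = μ.re * μ.re + μ.im * μ.im := by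
        rw [Complex.sq_norm, Complex.normSq_apply]
      linarith
    have hre : ((s : ℂ) + μ).re = s + μ.re := by simp
    have him : ((s : ℂ) + μ).im = μ.im := by simp
    have hnsq : ‖(s : ℂ) + μ‖ ^ 2 = (s + μ.re) ^ 2 + μ.im ^ 2 := by
      rw [Complex.sq_norm, Complex.normSq_apply, hre, him]; ring
    have hgoal2 : ‖(s : ℂ) + μ‖ ^ 2 ≤ (s - δ / 2) ^ 2 := by
      rw [hnsq]
      have hsa : s * μ.re + s * δ ≤ 0 := by nlinarith [mul_le_mul_of_nonneg_left ha hs0.le]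
      have hsR' : R ^ 2 ≤ s * δ - δ * δ := by nlinarith [hsR]
      have expand : (s + μ.re) ^ 2 + μ.im ^ 2
          = s ^ 2 + 2 * (s * μ.re) + (μ.re * μ.re + μ.im * μ.im) := by ring
      have expand2 : (s - δ / 2) ^ 2 = s ^ 2 - s * δ + δ * δ / 4 := by ring
      rw [expand, expand2]
      have hδδ : 0 ≤ δ * δ := mul_self_nonneg δ
      nlinarith [hsa, hb, hsR', hδδ]
    have hrhs : 0 ≤ s - δ / 2 := by linarith
    nlinarith [norm_nonneg ((s : ℂ) + μ)]
  set q : ℝ := s - δ / 4 with hqdef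
  have hq0 : 0 < q := by simp only [hqdef]; linarith
  have hqs : q < s := by simp only [hqdef]; linarith
  have hρ : spectralRadius ℂ A < ENNReal.ofReal q := by
    have h1 : spectralRadius ℂ A ≤ ENNReal.ofReal (s - δ / 2) := by
      rw [spectralRadius]
      refine iSup₂_le fun μ' hμ' => ?_
      rw [← ENNReal.ofReal_coe_nnreal, coe_nnnorm]
      exact ENNReal.ofReal_le_ofReal (hAnorm μ' hμ')
    refine lt_of_le_of_lt h1 ?_
    rw [ENNReal.ofReal_lt_ofReal_iff (by linarith)]
    linarith
  have hev : ∀ᶠ k : ℕ in atTop, (‖A ^ k‖₊ : ENNReal) ^ (1 / (k : ℝ)) < ENNReal.ofReal q :=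
    (spectrum.pow_nnnorm_pow_one_div_tendsto_nhds_spectralRadius A).eventually_lt_const hρ
  have hev2 : ∀ᶠ k : ℕ in atTop, ‖A ^ k‖ ≤ q ^ k := by
    filter_upwards [hev, Filter.eventually_ge_atTop 1] with k hk hk1
    have hk0 : (k : ℝ) ≠ 0 := by positivity
    have h1 : ((‖A ^ k‖₊ : ENNReal) ^ (1 / (k : ℝ))) ^ (k : ℝ) ≤ (ENNReal.ofReal q) ^ (k : ℝ) :=
      ENNReal.rpow_le_rpow hk.le (by positivity)
    rw [← ENNReal.rpow_mul, one_div_mul_cancel hk0, ENNReal.rpow_one] at h1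
    rw [ENNReal.rpow_natCast, ← ENNReal.ofReal_pow hq0.le, ← ENNReal.ofReal_coe_nnreal, coe_nnnorm] at h1
    exact (ENNReal.ofReal_le_ofReal_iff (by positivity)).mp h1
  set x : Matrix (Fin n) (Fin n) ℂ := (s : ℂ)⁻¹ • A with hxdef
  have hsne : (s : ℂ) ≠ 0 := by
    simpa using hs0.ne'
  have hxk : ∀ k, ‖x ^ k‖ = s⁻¹ ^ k * ‖A ^ k‖ := by
    intro k
    rw [hxdef, smul_pow, norm_smul, norm_pow, norm_inv, Complex.norm_real,
      Real.norm_eq_abs, abs_of_pos hs0]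
  have hsum : Summable fun k => x ^ k := by
    refine Summable.of_norm_bounded_eventually_nat
      (g := fun k => (q / s) ^ k) (summable_geometric_of_lt_one (by positivity) (by rw [div_lt_one hs0]; exact hqs)) ?_
    filter_upwards [hev2] with k hk
    rw [hxk]
    calc s⁻¹ ^ k * ‖A ^ k‖ ≤ s⁻¹ ^ k * q ^ k :=
          mul_le_mul_of_nonneg_left hk (by positivity)
    _ = (q / s) ^ k := by rw [div_eq_mul_inv, mul_pow]; ring
  set S : Matrix (Fin n) (Fin n) ℂ := ∑' k, x ^ k with hSdef
  have hterm0 : Tendsto (fun k => x ^ k) atTop (nhds 0) := hsum.tendsto_atTop_zero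
  have hps : Tendsto (fun N => ∑ i ∈ Finset.range N, x ^ i) atTop (nhds S) :=
    hsum.hasSum.tendsto_sum_nat
  have hS1 : S * (1 - x) = 1 := by
    have h1 : Tendsto (fun N => (∑ i ∈ Finset.range N, x ^ i) * (x - 1)) atTop
        (nhds (S * (x - 1))) := hps.mul_const _
    have h2 : Tendsto (fun N : ℕ => x ^ N - 1) atTop (nhds (0 - 1)) := hterm0.sub_const 1
    have h3 : (fun N => (∑ i ∈ Finset.range N, x ^ i) * (x - 1)) = fun N : ℕ => x ^ N - 1 := by
      funext N; exact geom_sum_mul x N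
    rw [h3] at h1
    have h4 : S * (x - 1) = 0 - 1 := tendsto_nhds_unique h1 h2
    have h5 : S * (1 - x) = -(S * (x - 1)) := by noncomm_ring
    rw [h5, h4]; simp
  have hS2 : (1 - x) * S = 1 := by
    have h1 : Tendsto (fun N => (x - 1) * ∑ i ∈ Finset.range N, x ^ i) atTop
        (nhds ((x - 1) * S)) := hps.const_mul _
    have h2 : Tendsto (fun N : ℕ => x ^ N - 1) atTop (nhds (0 - 1)) := hterm0.sub_const 1
    have h3 : (fun N => (x - 1) * ∑ i ∈ Finset.range N, x ^ i) = fun N : ℕ => x ^ N - 1 := by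
      funext N; exact mul_geom_sum x N
    rw [h3] at h1
    have h4 : (x - 1) * S = 0 - 1 := tendsto_nhds_unique h1 h2
    have h5 : (1 - x) * S = -((x - 1) * S) := by noncomm_ring
    rw [h5, h4]; simp
  have hNnA : ∀ i j, Nn (A i j) := by
    intro i j
    by_cases hij : i = j
    · subst hij
      have : A i i = ((M i i + s : ℝ) : ℂ) := by
        simp [hAdef, hBdef, Matrix.add_apply, Matrix.smul_apply, Matrix.one_apply,
          Matrix.map_apply]
        ring
      rw [this]; exact Nn.ofReal (hsdiag i)
    · have : A i j = ((M i j : ℝ) : ℂ) := by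
        simp [hAdef, hBdef, Matrix.add_apply, Matrix.smul_apply, Matrix.one_apply, hij,
          Matrix.map_apply]
      rw [this]; exact Nn.ofReal (hMetz i j hij)
  have hNnx : ∀ i j, Nn (x i j) := by
    intro i j
    have : x i j = ((s⁻¹ : ℝ) : ℂ) * A i j := by
      rw [hxdef, Matrix.smul_apply, Complex.ofReal_inv, smul_eq_mul]
    rw [this]
    exact (Nn.ofReal (inv_nonneg.mpr hs0.le)).mul (hNnA i j)
  have hNnS : ∀ i j, Nn (S i j) := by
    intro i j
    have hps2 : Tendsto (fun N => entryHom (n := n) i j (∑ k ∈ Finset.range N, x ^ k)) atTop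
        (nhds (entryHom (n := n) i j S)) := ((entry_continuous i j).tendsto S).comp hps
    refine isClosed_Nn.mem_of_tendsto hps2 (Filter.Eventually.of_forall fun N => ?_)
    show Nn ((∑ k ∈ Finset.range N, x ^ k) i j)
    have : (∑ k ∈ Finset.range N, x ^ k) i j = ∑ k ∈ Finset.range N, (x ^ k) i j := by
      simp [Matrix.sum_apply]
    rw [this]
    exact Nn.sum fun k _ => nnM_pow hNnx k i j
  set NN : Matrix (Fin n) (Fin n) ℂ := (s : ℂ)⁻¹ • S with hNNdef
  have hneg : (s : ℂ) • ((1 : Matrix (Fin n) (Fin n) ℂ) - x) = -B := by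
    rw [smul_sub, hxdef, smul_smul, mul_inv_cancel₀ hsne, one_smul, hAdef]
    abel
  have hNB : NN * (-B) = 1 := by
    rw [← hneg, hNNdef, mul_smul_comm, smul_mul_assoc, smul_smul, mul_inv_cancel₀ hsne,
      one_smul, hS1]
  have hBN : (-B) * NN = 1 := by
    rw [← hneg, hNNdef, smul_mul_assoc, mul_smul_comm, smul_smul, mul_inv_cancel₀ hsne,
      one_smul, hS2]
  have hBNneg : B * NN = -1 := by
    have h := congrArg Neg.neg hBN
    rw [neg_mul, neg_neg] at h
    rw [h]
  have hNnN : ∀ i j, Nn (NN i j) := by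
    intro i j
    have : NN i j = ((s⁻¹ : ℝ) : ℂ) * S i j := by
      rw [hNNdef, Matrix.smul_apply, Complex.ofReal_inv, smul_eq_mul]
    rw [this]
    exact (Nn.ofReal (inv_nonneg.mpr hs0.le)).mul (hNnS i j)
  set vℂ : Fin n → ℂ := NN *ᵥ (fun _ => 1) with hvcdef
  have hvsum : ∀ i, vℂ i = ∑ j, NN i j := by
    intro i; simp [hvcdef, Matrix.mulVec, dotProduct]
  have hvNn : ∀ i, Nn (vℂ i) := by
    intro i; rw [hvsum]; exact Nn.sum fun j _ => hNnN i j
  have hvpos : ∀ i, 0 < (vℂ i).re := by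
    intro i
    rcases lt_or_eq_of_le (hvNn i).1 with hlt | heq
    · exact hlt
    · exfalso
      have hsum0 : ∑ j, (NN i j).re = 0 := by
        have h1 : (vℂ i).re = ∑ j, (NN i j).re := by
          rw [hvsum]; exact Complex.re_sum _ _
        rw [← h1, ← heq]
      have hallz : ∀ j ∈ Finset.univ, (NN i j).re = 0 :=
        (Finset.sum_eq_zero_iff_of_nonneg fun j _ => (hNnN i j).1).mp hsum0
      have hrow : ∀ j, NN i j = 0 := fun j =>
        Complex.ext (hallz j (Finset.mem_univ j)) (hNnN i j).2
      have hz : (NN * (-B)) i i = 0 := by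
        rw [Matrix.mul_apply]
        exact Finset.sum_eq_zero fun k _ => by rw [hrow k, zero_mul]
      rw [hNB, Matrix.one_apply_eq] at hz
      exact one_ne_zero hz
  set v : Fin n → ℝ := fun i => (vℂ i).re with hvdef
  have hvc : ∀ i, vℂ i = ((v i : ℝ) : ℂ) := by
    intro i
    refine Complex.ext ?_ ?_
    · simp [hvdef]
    · simp [hvdef, (hvNn i).2]
  have hBv : B *ᵥ vℂ = fun _ => -1 := by
    rw [hvcdef, Matrix.mulVec_mulVec, hBNneg]
    funext i
    simp [Matrix.neg_mulVec, Matrix.one_mulVec]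
  refine ⟨v, hvpos, fun i => ?_⟩
  have hcast : (B *ᵥ vℂ) i = (((M *ᵥ v) i : ℝ) : ℂ) := by
    simp only [Matrix.mulVec, dotProduct, hBdef, Matrix.map_apply]
    push_cast
    refine Finset.sum_congr rfl fun j _ => ?_
    rw [hvc j]
  have := congrFun hBv i
  rw [hcast] at this
  exact_mod_cast this

end MHDL

open MHDL in
/-- If `Λ` is Metzler and `Λ̄` is Hurwitz with `Λ̄ ⪰ Λ` entrywise, then there exists a
positive diagonal matrix `D` such that `Λ̄'D + DΛ̄` is negative definite. -/
theorem metzler_hurwitz_diag_lyapunov {n : ℕ} (Λ Λb : Matrix (Fin n) (Fin n) ℝ)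
    (hMetz : ∀ i j, i ≠ j → 0 ≤ Λ i j)
    (hHur : ∀ μ ∈ spectrum ℂ (Λb.map Complex.ofReal), μ.re < 0)
    (hge : ∀ i j, Λ i j ≤ Λb i j) :
    ∃ d : Fin n → ℝ, (∀ i, 0 < d i) ∧
      (-(Λbᵀ * Matrix.diagonal d + Matrix.diagonal d * Λb)).PosDef := by
  classical
  have hMetzb : ∀ i j, i ≠ j → 0 ≤ Λb i j := fun i j hij => (hMetz i j hij).trans (hge i j)
  obtain ⟨v, hv, hMv⟩ := MHDL.exists_pos_vec Λb hMetzb hHur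
  have hMetzt : ∀ i j, i ≠ j → 0 ≤ Λbᵀ i j := fun i j hij => hMetzb j i (Ne.symm hij)
  have hHurT : ∀ μ ∈ spectrum ℂ (Λbᵀ.map Complex.ofReal), μ.re < 0 := by
    intro μ hμ
    apply hHur μ
    have hmapT : (Λbᵀ).map Complex.ofReal = (Λb.map Complex.ofReal)ᵀ := rfl
    rw [hmapT] at hμ
    rw [spectrum.mem_iff] at hμ ⊢
    intro hunit
    apply hμ
    have heq : (algebraMap ℂ (Matrix (Fin n) (Fin n) ℂ)) μ - (Λb.map Complex.ofReal)ᵀ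
        = ((algebraMap ℂ (Matrix (Fin n) (Fin n) ℂ)) μ - Λb.map Complex.ofReal)ᵀ := by
      rw [Matrix.transpose_sub]
      congr 1
      rw [Matrix.algebraMap_eq_diagonal]
      exact (Matrix.diagonal_transpose _).symm
    rw [heq, Matrix.isUnit_iff_isUnit_det, Matrix.det_transpose,
      ← Matrix.isUnit_iff_isUnit_det]
    exact hunit
  obtain ⟨w, hw, hMw⟩ := MHDL.exists_pos_vec Λbᵀ hMetzt hHurT
  set d : Fin n → ℝ := fun i => w i / v i with hddef
  have hd : ∀ i, 0 < d i := fun i => div_pos (hw i) (hv i)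
  have hQent : ∀ i j, (Λbᵀ * Matrix.diagonal d + Matrix.diagonal d * Λb) i j
      = Λb j i * d j + d i * Λb i j := by
    intro i j
    rw [Matrix.add_apply, Matrix.mul_diagonal, Matrix.diagonal_mul, Matrix.transpose_apply]
  have hQsym : ∀ i j, (Λbᵀ * Matrix.diagonal d + Matrix.diagonal d * Λb) i j
      = (Λbᵀ * Matrix.diagonal d + Matrix.diagonal d * Λb) j i := by
    intro i j; rw [hQent, hQent]; ring
  have hQoff : ∀ i j, i ≠ j → 0 ≤ (Λbᵀ * Matrix.diagonal d + Matrix.diagonal d * Λb) i j := by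
    intro i j hij
    rw [hQent]
    exact add_nonneg (mul_nonneg (hMetzb j i (Ne.symm hij)) (hd j).le)
      (mul_nonneg (hd i).le (hMetzb i j hij))
  have hQrow : ∀ i, ∑ j, (Λbᵀ * Matrix.diagonal d + Matrix.diagonal d * Λb) i j * v j
      = -(1 + d i) := by
    intro i
    have h2 : ∑ j, Λb j i * w j = -1 := by
      have := hMw i
      simpa [Matrix.mulVec, dotProduct, Matrix.transpose_apply] using this
    have h3 : ∑ j, Λb i j * v j = -1 := by
      have := hMv i
      simpa [Matrix.mulVec, dotProduct] using this
    have h1 : ∑ j, (Λbᵀ * Matrix.diagonal d + Matrix.diagonal d * Λb) i j * v j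
        = (∑ j, Λb j i * w j) + d i * ∑ j, Λb i j * v j := by
      rw [Finset.mul_sum, ← Finset.sum_add_distrib]
      refine Finset.sum_congr rfl fun j _ => ?_
      rw [hQent]
      have hdv : d j * v j = w j := by
        rw [hddef]; exact div_mul_cancel₀ (w j) (hv j).ne'
      calc (Λb j i * d j + d i * Λb i j) * v j
          = Λb j i * (d j * v j) + d i * (Λb i j * v j) := by ring
        _ = Λb j i * w j + d i * (Λb i j * v j) := by rw [hdv]
    rw [h1, h2, h3]; ring
  refine ⟨d, hd, Matrix.posDef_iff_dotProduct_mulVec.mpr ⟨?_, ?_⟩⟩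
  · show (-(Λbᵀ * Matrix.diagonal d + Matrix.diagonal d * Λb))ᴴ
      = -(Λbᵀ * Matrix.diagonal d + Matrix.diagonal d * Λb)
    ext i j
    simp only [Matrix.conjTranspose_apply, Matrix.neg_apply, star_trivial, neg_inj]
    exact hQsym j i
  · intro x hx
    obtain ⟨i₀, hi₀⟩ : ∃ i, x i ≠ 0 := Function.ne_iff.mp hx
    set y : Fin n → ℝ := fun i => x i / v i with hydef
    have hxy : ∀ i, x i = y i * v i := fun i => (div_mul_cancel₀ (x i) (hv i).ne').symm
    have hy0 : y i₀ ≠ 0 := by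
      intro hcon
      exact hi₀ (by rw [hxy i₀, hcon, zero_mul])
    set Q : Matrix (Fin n) (Fin n) ℝ := Λbᵀ * Matrix.diagonal d + Matrix.diagonal d * Λb
      with hQdef
    have expand : x ⬝ᵥ (Q *ᵥ x) = ∑ i, ∑ j, Q i j * v i * v j * (y i * y j) := by
      calc x ⬝ᵥ (Q *ᵥ x) = ∑ i, ∑ j, x i * (Q i j * x j) := by
            simp only [dotProduct, Matrix.mulVec, Finset.mul_sum]
        _ = ∑ i, ∑ j, Q i j * v i * v j * (y i * y j) := by
            refine Finset.sum_congr rfl fun i _ => Finset.sum_congr rfl fun j _ => ?_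
            rw [hxy i, hxy j]; ring
    have step1 : ∑ i, ∑ j, Q i j * v i * v j * (y i * y j)
        ≤ ∑ i, ∑ j, Q i j * v i * v j * ((y i * y i + y j * y j) / 2) := by
      refine Finset.sum_le_sum fun i _ => Finset.sum_le_sum fun j _ => ?_
      by_cases hij : i = j
      · subst hij; apply le_of_eq; ring
      · have hc : 0 ≤ Q i j * v i * v j :=
          mul_nonneg (mul_nonneg (hQoff i j hij) (hv i).le) (hv j).le
        have hyy : y i * y j ≤ (y i * y i + y j * y j) / 2 := by
          nlinarith [sq_nonneg (y i - y j)]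
        exact mul_le_mul_of_nonneg_left hyy hc
    have step2 : ∑ i, ∑ j, Q i j * v i * v j * ((y i * y i + y j * y j) / 2)
        = ∑ i, y i * y i * (v i * ∑ j, Q i j * v j) := by
      have hsplit : ∑ i, ∑ j, Q i j * v i * v j * ((y i * y i + y j * y j) / 2)
          = (∑ i, ∑ j, Q i j * v i * v j * (y i * y i) / 2)
            + ∑ i, ∑ j, Q i j * v i * v j * (y j * y j) / 2 := by
        rw [← Finset.sum_add_distrib]
        refine Finset.sum_congr rfl fun i _ => ?_
        rw [← Finset.sum_add_distrib]
        refine Finset.sum_congr rfl fun j _ => by ring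
      have hswap : ∑ i, ∑ j, Q i j * v i * v j * (y j * y j) / 2
          = ∑ i, ∑ j, Q i j * v i * v j * (y i * y i) / 2 := by
        rw [Finset.sum_comm]
        refine Finset.sum_congr rfl fun i _ => Finset.sum_congr rfl fun j _ => ?_
        rw [hQsym i j]; ring
      rw [hsplit, hswap, ← Finset.sum_add_distrib]
      refine Finset.sum_congr rfl fun i _ => ?_
      rw [← Finset.sum_add_distrib, Finset.mul_sum, Finset.mul_sum]
      refine Finset.sum_congr rfl fun j _ => by ring
    have step3 : ∑ i, y i * y i * (v i * ∑ j, Q i j * v j)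
        = -∑ i, y i * y i * (v i * (1 + d i)) := by
      rw [← Finset.sum_neg_distrib]
      refine Finset.sum_congr rfl fun i _ => ?_
      rw [hQrow i]; ring
    have step4 : 0 < ∑ i, y i * y i * (v i * (1 + d i)) := by
      refine Finset.sum_pos' (fun i _ => ?_) ⟨i₀, Finset.mem_univ i₀, ?_⟩
      · exact mul_nonneg (mul_self_nonneg _)
          (mul_nonneg (hv i).le (by linarith [(hd i).le] : (0:ℝ) ≤ 1 + d i))
      · exact mul_pos (mul_self_pos.mpr hy0)
          (mul_pos (hv i₀) (by linarith [hd i₀] : (0:ℝ) < 1 + d i₀))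
    have key : x ⬝ᵥ (Q *ᵥ x) < 0 := by
      rw [expand]
      calc ∑ i, ∑ j, Q i j * v i * v j * (y i * y j)
          ≤ ∑ i, ∑ j, Q i j * v i * v j * ((y i * y i + y j * y j) / 2) := step1
        _ = ∑ i, y i * y i * (v i * ∑ j, Q i j * v j) := step2
        _ = -∑ i, y i * y i * (v i * (1 + d i)) := step3
        _ < 0 := by linarith [step4]
    have : star x ⬝ᵥ ((-Q) *ᵥ x) = -(x ⬝ᵥ (Q *ᵥ x)) := by
      rw [Matrix.neg_mulVec, dotProduct_neg, star_trivial]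
    rw [this]
    linarith [key]
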